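/- arXiv:2007.00298 — 2 statements merged into one kernel-verified Lean document; each statement's English description precedes it below -/
import Mathlib

section
/- Fix points v₁, v₂ ∈ ℝ² and unit vectors n₁, n₂ ∈ ℝ². For x ∈ ℝ² define the distances d₁(x) = (v₁ − x)·n₁ and d₂(x) = (v₂ − x)·n₂, the scaled normals ñ₁(x) = n₁/d₁(x) and ñ₂(x) = n₂/d₂(x), and the weight function w(x) = det(ñ₁(x), ñ₂(x)), where det(a,b) = a₁b₂ − a₂b₁. Let x₀ ∈ ℝ² be a point with d₁(x₀) ≠ 0, d₂(x₀) ≠ 0 and det(n₁, n₂) ≠ 0. Then w is differentiable at x₀, w(x₀) ≠ 0, and ∇w(x₀) = w(x₀) ( ñ₁(x₀) + ñ₂(x₀) ), i.e. the ratio function R(x₀) = ∇w(x₀)/w(x₀) equals ñ₁(x₀) + ñ₂(x₀). -/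
open EuclideanSpace in
/-- For the Wachspress weight `w(x) = det(ñ₁(x), ñ₂(x))` built from
distances `dᵢ(x) = (vᵢ − x)·nᵢ` and scaled normals `ñᵢ(x) = nᵢ/dᵢ(x)`, at a point
`x₀` with `d₁(x₀) ≠ 0`, `d₂(x₀) ≠ 0` and `det(n₁,n₂) ≠ 0` one has `w(x₀) ≠ 0`,
`w` is differentiable at `x₀`, and `∇w(x₀) = w(x₀)(ñ₁(x₀) + ñ₂(x₀))`. -/
theorem wachspress_weight_gradient
    (v₁ v₂ n₁ n₂ x₀ : EuclideanSpace ℝ (Fin 2))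
    (hn₁ : ‖n₁‖ = 1) (hn₂ : ‖n₂‖ = 1)
    (hd₁ : (inner ℝ (v₁ - x₀) n₁ : ℝ) ≠ 0)
    (hd₂ : (inner ℝ (v₂ - x₀) n₂ : ℝ) ≠ 0)
    (hdet : n₁ 0 * n₂ 1 - n₁ 1 * n₂ 0 ≠ 0) :
    let d₁ : EuclideanSpace ℝ (Fin 2) → ℝ := fun x => inner ℝ (v₁ - x) n₁
    let d₂ : EuclideanSpace ℝ (Fin 2) → ℝ := fun x => inner ℝ (v₂ - x) n₂
    let nt₁ : EuclideanSpace ℝ (Fin 2) → EuclideanSpace ℝ (Fin 2) :=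
      fun x => (d₁ x)⁻¹ • n₁
    let nt₂ : EuclideanSpace ℝ (Fin 2) → EuclideanSpace ℝ (Fin 2) :=
      fun x => (d₂ x)⁻¹ • n₂
    let w : EuclideanSpace ℝ (Fin 2) → ℝ :=
      fun x => nt₁ x 0 * nt₂ x 1 - nt₁ x 1 * nt₂ x 0
    w x₀ ≠ 0 ∧ HasGradientAt w (w x₀ • (nt₁ x₀ + nt₂ x₀)) x₀ := by
  intro d₁ d₂ nt₁ nt₂ w
  set C : ℝ := n₁ 0 * n₂ 1 - n₁ 1 * n₂ 0 with hC
  have hw : w = fun x => C * ((d₁ x)⁻¹ * (d₂ x)⁻¹) := by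
    funext x
    simp only [w, nt₁, nt₂, PiLp.smul_apply, smul_eq_mul, hC]
    ring
  have hd₁' : d₁ x₀ ≠ 0 := hd₁
  have hd₂' : d₂ x₀ ≠ 0 := hd₂
  have hw0 : w x₀ ≠ 0 := by
    rw [hw]
    exact mul_ne_zero hdet (mul_ne_zero (inv_ne_zero hd₁') (inv_ne_zero hd₂'))
  refine ⟨hw0, ?_⟩
  have hL₁ : HasFDerivAt d₁ (-(innerSL ℝ n₁)) x₀ := by
    have h : d₁ = fun x => (inner ℝ v₁ n₁ : ℝ) - innerSL ℝ n₁ x := by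
      funext x
      simp only [d₁, inner_sub_left, innerSL_apply_apply]
      rw [real_inner_comm n₁ x]
    rw [h]
    exact (innerSL ℝ n₁).hasFDerivAt.const_sub (inner ℝ v₁ n₁ : ℝ)
  have hL₂ : HasFDerivAt d₂ (-(innerSL ℝ n₂)) x₀ := by
    have h : d₂ = fun x => (inner ℝ v₂ n₂ : ℝ) - innerSL ℝ n₂ x := by
      funext x
      simp only [d₂, inner_sub_left, innerSL_apply_apply]
      rw [real_inner_comm n₂ x]
    rw [h]
    exact (innerSL ℝ n₂).hasFDerivAt.const_sub (inner ℝ v₂ n₂ : ℝ)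
  have hI₁ := (hasFDerivAt_inv hd₁').comp x₀ hL₁
  have hI₂ := (hasFDerivAt_inv hd₂').comp x₀ hL₂
  have hmul := (hI₁.mul hI₂).const_mul C
  rw [hasGradientAt_iff_hasFDerivAt]
  have hwx : w x₀ = C * ((d₁ x₀)⁻¹ * (d₂ x₀)⁻¹) := by rw [hw]
  rw [hw]
  convert hmul using 1
  · rfl
  · rfl
  ext y
  simp only [InnerProductSpace.toDual_apply_apply, ContinuousLinearMap.smul_apply,
    ContinuousLinearMap.add_apply, ContinuousLinearMap.comp_apply,
    ContinuousLinearMap.neg_apply, ContinuousLinearMap.smulRight_apply,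
    ContinuousLinearMap.one_apply, innerSL_apply_apply, smul_eq_mul,
    ContinuousLinearMap.toSpanSingleton_apply,
    real_inner_smul_left, inner_add_left, nt₁, nt₂, hwx, Function.comp]
  field_simp
  ring
end

section
/- Fix points v₁, …, v_m ∈ ℝ² and unit vectors n₁, …, n_m ∈ ℝ² (indices taken modulo m). For x ∈ ℝ² set dᵢ(x) = (vᵢ − x)·nᵢ, ñᵢ(x) = nᵢ/dᵢ(x), wᵢ(x) = det(ñᵢ(x), ñᵢ₊₁(x)), W(x) = Σ_{j=1}^m w_j(x), and λᵢ(x) = wᵢ(x)/W(x), where det(a,b) = a₁b₂ − a₂b₁. Let x₀ ∈ ℝ² be a point at which dᵢ(x₀) ≠ 0 for all i, det(nᵢ, nᵢ₊₁) ≠ 0 for all i, and W(x₀) ≠ 0. Then each λᵢ is differentiable at x₀ and ∇λᵢ(x₀) = λᵢ(x₀) ( ñᵢ(x₀) + ñᵢ₊₁(x₀) − Σ_{j=1}^m λ_j(x₀) ( ñ_j(x₀) + ñ_{j+1}(x₀) ) ). -/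
open InnerProductSpace

section Helpers
variable {F : Type*} [NormedAddCommGroup F] [InnerProductSpace ℝ F] [CompleteSpace F]
variable {f g : F → ℝ} {f' g' x : F}

local notation "⟪" a ", " b "⟫" => @inner ℝ _ _ a b

lemma hasGradientAt_mul (hf : HasGradientAt f f' x) (hg : HasGradientAt g g' x) :
    HasGradientAt (fun y => f y * g y) (f x • g' + g x • f') x := by
  rw [hasGradientAt_iff_hasFDerivAt] at hf hg ⊢
  refine (hf.fun_mul hg).congr_fderiv ?_
  ext y
  simp [toDual_apply_apply, inner_add_left, real_inner_smul_left]

lemma hasGradientAt_inv (hf : HasGradientAt f f' x) (hx : f x ≠ 0) :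
    HasGradientAt (fun y => (f y)⁻¹) ((-(f x ^ 2)⁻¹) • f') x := by
  rw [hasGradientAt_iff_hasFDerivAt] at hf ⊢
  have h := (hasDerivAt_inv hx).comp_hasFDerivAt x hf
  refine h.congr_fderiv ?_
  ext y
  simp [toDual_apply_apply, real_inner_smul_left]

lemma hasGradientAt_const_mul (c : ℝ) (hf : HasGradientAt f f' x) :
    HasGradientAt (fun y => c * f y) (c • f') x := by
  have := hasGradientAt_mul (hasGradientAt_const x c) hf
  simpa using this

lemma hasGradientAt_div (hf : HasGradientAt f f' x) (hg : HasGradientAt g g' x)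
    (hx : g x ≠ 0) :
    HasGradientAt (fun y => f y / g y) (((g x) ^ 2)⁻¹ • (g x • f' - f x • g')) x := by
  have h1 := hasGradientAt_inv hg hx
  have h2 := hasGradientAt_mul hf h1
  have h3 : HasGradientAt (fun y => f y / g y)
      (f x • ((-(g x ^ 2)⁻¹) • g') + (g x)⁻¹ • f') x := by
    simpa [div_eq_mul_inv] using h2
  convert h3 using 1
  match_scalars
  · field_simp
  · field_simp

lemma hasGradientAt_sum {ι : Type*} (s : Finset ι) (f : ι → F → ℝ) (f' : ι → F)
    (h : ∀ j ∈ s, HasGradientAt (f j) (f' j) x) :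
    HasGradientAt (fun y => ∑ j ∈ s, f j y) (∑ j ∈ s, f' j) x := by
  simp only [hasGradientAt_iff_hasFDerivAt] at h ⊢
  refine (HasFDerivAt.fun_sum h).congr_fderiv ?_
  ext y
  simp [toDual_apply_apply, sum_inner]

lemma hasGradientAt_inner_sub (v nn : F) (x : F) :
    HasGradientAt (fun y : F => (⟪v - y, nn⟫ : ℝ)) (-nn) x := by
  rw [hasGradientAt_iff_hasFDerivAt]
  have h := (innerSL ℝ nn).hasFDerivAt (x := x)
  have h2 := (h.neg.add_const (⟪v, nn⟫ : ℝ))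
  have hfun : (fun y : F => (⟪v - y, nn⟫ : ℝ)) = fun y => -(innerSL ℝ nn y) + ⟪v, nn⟫ := by
    funext y
    simp [inner_sub_left, real_inner_comm]
    ring
  rw [hfun]
  refine h2.congr_fderiv ?_
  ext y
  simp [toDual_apply_apply, real_inner_comm]

end Helpers

/-- Gradient formula for the Wachspress coordinates. With vertices
`vᵢ` and unit edge normals `nᵢ` (indices mod m), `dᵢ(x) = (vᵢ − x)·nᵢ`,
`ñᵢ(x) = nᵢ/dᵢ(x)`, `wᵢ(x) = det(ñᵢ(x), ñᵢ₊₁(x))`, `W = ∑ⱼ wⱼ`, `λᵢ = wᵢ/W`,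
at a point `x₀` with `dᵢ(x₀) ≠ 0` for all `i`, `det(nᵢ, nᵢ₊₁) ≠ 0` for all `i`,
and `W(x₀) ≠ 0`, each `λᵢ` is differentiable at `x₀` with
`∇λᵢ(x₀) = λᵢ(x₀)(ñᵢ(x₀) + ñᵢ₊₁(x₀) − ∑ⱼ λⱼ(x₀)(ñⱼ(x₀) + ñⱼ₊₁(x₀)))`. -/
theorem wachspress_coordinate_gradient
    (m : ℕ) [NeZero m]
    (v n : Fin m → EuclideanSpace ℝ (Fin 2))
    (hn : ∀ i, ‖n i‖ = 1)
    (x₀ : EuclideanSpace ℝ (Fin 2))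
    (hdet : ∀ i : Fin m, n i 0 * n (i + 1) 1 - n i 1 * n (i + 1) 0 ≠ 0) :
    let d : Fin m → EuclideanSpace ℝ (Fin 2) → ℝ := fun i x => inner ℝ (v i - x) (n i)
    let nt : Fin m → EuclideanSpace ℝ (Fin 2) → EuclideanSpace ℝ (Fin 2) :=
      fun i x => (d i x)⁻¹ • n i
    let w : Fin m → EuclideanSpace ℝ (Fin 2) → ℝ :=
      fun i x => nt i x 0 * nt (i + 1) x 1 - nt i x 1 * nt (i + 1) x 0
    let W : EuclideanSpace ℝ (Fin 2) → ℝ := fun x => ∑ j, w j x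
    (∀ i, d i x₀ ≠ 0) → W x₀ ≠ 0 →
      ∀ i : Fin m,
        HasGradientAt (fun x => w i x / W x)
          ((w i x₀ / W x₀) •
            (nt i x₀ + nt (i + 1) x₀ -
              ∑ j, (w j x₀ / W x₀) • (nt j x₀ + nt (j + 1) x₀))) x₀ := by
  intro d nt w W hd hW0 i
  have hnt : ∀ j x, nt j x = (d j x)⁻¹ • n j := fun _ _ => rfl
  have hC : ∀ j x, w j x =
      (n j 0 * n (j + 1) 1 - n j 1 * n (j + 1) 0) * ((d j x)⁻¹ * (d (j + 1) x)⁻¹) := by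
    intro j x
    show ((d j x)⁻¹ • n j) 0 * ((d (j + 1) x)⁻¹ • n (j + 1)) 1 -
      ((d j x)⁻¹ • n j) 1 * ((d (j + 1) x)⁻¹ • n (j + 1)) 0 = _
    simp only [PiLp.smul_apply, smul_eq_mul]
    ring
  have hdgrad : ∀ k, HasGradientAt (d k) (-(n k)) x₀ :=
    fun k => hasGradientAt_inner_sub (v k) (n k) x₀
  have hinv : ∀ k, HasGradientAt (fun x => (d k x)⁻¹) (((d k x₀ ^ 2)⁻¹) • n k) x₀ := by
    intro k
    have := hasGradientAt_inv (hdgrad k) (hd k)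
    simpa using this
  have hw : ∀ j, HasGradientAt (w j) (w j x₀ • (nt j x₀ + nt (j + 1) x₀)) x₀ := by
    intro j
    have hp := hasGradientAt_mul (hinv j) (hinv (j + 1))
    have hq := hasGradientAt_const_mul (n j 0 * n (j + 1) 1 - n j 1 * n (j + 1) 0) hp
    have hq' : HasGradientAt
        (fun x => (n j 0 * n (j + 1) 1 - n j 1 * n (j + 1) 0) *
          ((d j x)⁻¹ * (d (j + 1) x)⁻¹))
        (w j x₀ • (nt j x₀ + nt (j + 1) x₀)) x₀ := by
      convert hq using 1
      rw [hC j x₀, hnt j x₀, hnt (j + 1) x₀]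
      have h1 := hd j
      have h2 := hd (j + 1)
      match_scalars
      · field_simp
      · field_simp
    exact hq'.congr_of_eventuallyEq (Filter.Eventually.of_forall (hC j))
  have hWgrad : HasGradientAt W (∑ j, w j x₀ • (nt j x₀ + nt (j + 1) x₀)) x₀ :=
    hasGradientAt_sum Finset.univ (fun j => w j)
      (fun j => w j x₀ • (nt j x₀ + nt (j + 1) x₀)) (fun j _ => hw j)
  have hdiv := hasGradientAt_div (hw i) hWgrad hW0
  convert hdiv using 1
  rw [smul_sub, smul_sub, Finset.smul_sum, Finset.smul_sum, Finset.smul_sum]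
  congr 1
  · rw [smul_smul, smul_smul]
    congr 1
    field_simp
  · refine Finset.sum_congr rfl fun j _ => ?_
    rw [smul_smul, smul_smul, smul_smul]
    congr 1
    rw [pow_two]
    ring
end
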